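/- Let p be a prime, k a field of characteristic p, e ≥ 1 an integer and c ∈ k nonzero. Let A = (k[z]/(z^e))[u], a k-vector space with basis {z^l u^n : 0 ≤ l ≤ e−1, n ≥ 0}, and let D : A → A be the k-linear map with D(z^l u^n) = e·c·n·z^{l+e−1}·u^{n−1} (where z^{l+e−1} is computed in k[z]/(z^e)), i.e. D(f) = e·c·z^{e−1}·∂f/∂u. Then the kernel of D has k-basis {z^l u^n : 0 ≤ l ≤ e−1, n ≥ 0, and (l ≥ 1 or p ∣ e·n)}, and the cokernel A/D(A) has k-basis given by the images of {z^l u^n : 0 ≤ l ≤ e−1, n ≥ 0, and (l ≤ e−2 or p ∣ e·(n+1))}. -/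

import Mathlib

open Polynomial Submodule

section Diagonal

variable {k ι M : Type*} [Field k] [AddCommGroup M] [Module k M]
  (b : Module.Basis ι k M) (f : M →ₗ[k] M) (a : ι → k) (σ : ι → ι)

lemma diag_apply (hf : ∀ i, f (b i) = a i • b (σ i)) (x : M) :
    f x = (b.repr x).sum fun i cc => (cc * a i) • b (σ i) := by
  conv_lhs => rw [← b.linearCombination_repr x]
  rw [Finsupp.linearCombination_apply, map_finsuppSum]
  refine Finsupp.sum_congr fun i _ => ?_
  rw [map_smul, hf, smul_smul]

lemma diag_ker (hf : ∀ i, f (b i) = a i • b (σ i))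
    (hσ : Set.InjOn σ {i | a i ≠ 0}) :
    LinearMap.ker f = span k (b '' {i | a i = 0}) := by
  classical
  apply le_antisymm
  · intro x hx
    rw [LinearMap.mem_ker] at hx
    rw [b.mem_span_image]
    intro i₀ hi₀
    simp only [Finset.mem_coe, Finsupp.mem_support_iff] at hi₀
    by_contra hai₀
    simp only [Set.mem_setOf_eq] at hai₀
    have h1 : b.repr (f x) (σ i₀) = 0 := by rw [hx, map_zero, Finsupp.coe_zero, Pi.zero_apply]
    rw [diag_apply b f a σ hf x, map_finsuppSum, Finsupp.sum_apply] at h1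
    rw [Finsupp.sum] at h1
    have h2 : ∀ j ∈ (b.repr x).support, j ≠ i₀ →
        (b.repr ((b.repr x j * a j) • b (σ j))) (σ i₀) = 0 := by
      intro j _ hj
      rw [map_smul, b.repr_self, Finsupp.smul_apply, Finsupp.single_apply]
      by_cases haj : a j = 0
      · simp [haj]
      · rw [if_neg, smul_zero]
        exact fun hcontra => hj (hσ haj hai₀ hcontra)
    have h3 : i₀ ∈ (b.repr x).support := Finsupp.mem_support_iff.2 hi₀
    rw [Finset.sum_eq_single_of_mem i₀ h3 h2] at h1
    rw [map_smul, b.repr_self, Finsupp.smul_apply, Finsupp.single_eq_same,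
      smul_eq_mul, mul_one] at h1
    exact hi₀ (by
      rcases mul_eq_zero.1 h1 with h | h
      · exact h
      · exact absurd h hai₀)
  · rw [span_le]
    rintro x ⟨i, hi, rfl⟩
    simp only [Set.mem_setOf_eq] at hi
    rw [SetLike.mem_coe, LinearMap.mem_ker, hf, hi, zero_smul]

lemma diag_range (hf : ∀ i, f (b i) = a i • b (σ i)) :
    LinearMap.range f = span k (b '' (σ '' {i | a i ≠ 0})) := by
  apply le_antisymm
  · rw [LinearMap.range_eq_map, ← b.span_eq, Submodule.map_span, span_le]
    rintro x ⟨y, ⟨i, rfl⟩, rfl⟩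
    rw [SetLike.mem_coe, hf]
    by_cases hai : a i = 0
    · rw [hai, zero_smul]; exact zero_mem _
    · exact smul_mem _ _ (subset_span ⟨σ i, ⟨i, hai, rfl⟩, rfl⟩)
  · rw [span_le]
    rintro x ⟨y, ⟨i, hi, rfl⟩, rfl⟩
    simp only [Set.mem_setOf_eq] at hi
    have : b (σ i) = (a i)⁻¹ • f (b i) := by rw [hf, smul_smul, inv_mul_cancel₀ hi, one_smul]
    rw [SetLike.mem_coe, this]
    exact smul_mem _ _ (LinearMap.mem_range_self f (b i))

lemma range_restrict_basis (s : Set ι) :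
    (Set.range fun i : ↥s => b i) = b '' s := by
  ext x
  simp [Set.mem_image, Set.mem_range]

lemma isCompl_span_basis (s : Set ι) :
    IsCompl (span k (b '' s)) (span k (Set.range fun i : ↥sᶜ => b i)) := by
  rw [range_restrict_basis]
  constructor
  · rw [disjoint_def]
    intro x hx hx'
    rw [b.mem_span_image] at hx hx'
    have hsub : ((b.repr x).support : Set ι) ⊆ s ∩ sᶜ := Set.subset_inter hx hx'
    rw [Set.inter_compl_self] at hsub
    have hsup : (b.repr x).support = ∅ := by simpa using hsub
    have : b.repr x = 0 := Finsupp.support_eq_empty.mp hsup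
    have := congrArg b.repr.symm this
    rwa [b.repr.symm_apply_apply, map_zero] at this
  · rw [codisjoint_iff, ← span_union, ← Set.image_union, Set.union_compl_self,
      Set.image_univ, b.span_eq]

/-- Basis of the quotient of `M` by the span of `b '' s`, indexed by `↥sᶜ`,
with values the images of the basis vectors. -/
noncomputable def quotBasis (s : Set ι) :
    Module.Basis ↥sᶜ k (M ⧸ span k (b '' s)) :=
  (Module.Basis.span (b.linearIndependent.comp (Subtype.val : ↥sᶜ → ι) Subtype.val_injective)).map
    (Submodule.quotientEquivOfIsCompl _ _ (isCompl_span_basis b s)).symm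

lemma quotBasis_apply (s : Set ι) (i : ↥sᶜ) :
    quotBasis b s i = Submodule.Quotient.mk (b i) := by
  rw [quotBasis, Module.Basis.map_apply]
  exact congrArg _ (Module.Basis.span_apply _ i)

/-- Basis of the span of `b '' s`, indexed by `↥s`. -/
noncomputable def spanBasis (s : Set ι) : Module.Basis ↥s k (span k (b '' s)) :=
  (Module.Basis.span (b.linearIndependent.comp (Subtype.val : ↥s → ι)
    Subtype.val_injective)).map (LinearEquiv.ofEq _ _
      (by rw [Set.range_comp, Subtype.range_coe]))

lemma spanBasis_apply (s : Set ι) (i : ↥s) :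
    (spanBasis b s i : M) = b i := by
  rw [spanBasis, Module.Basis.map_apply, LinearEquiv.coe_ofEq_apply]
  exact congrArg Subtype.val (Module.Basis.span_apply (b.linearIndependent.comp
    (Subtype.val : ↥s → ι) Subtype.val_injective) i)

end Diagonal

/-- The truncated polynomial ring `k[z]/(z^e)`. -/
abbrev TruncRing (k : Type*) [CommRing k] (e : ℕ) : Type _ :=
  Polynomial k ⧸ Ideal.span ({Polynomial.X ^ e} : Set (Polynomial k))

/-- The image of `z` in `k[z]/(z^e)`. -/
noncomputable def truncZ (k : Type*) [CommRing k] (e : ℕ) : TruncRing k e :=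
  Ideal.Quotient.mk _ Polynomial.X

/-- The `k`-linear map `D : (k[z]/(z^e))[u] → (k[z]/(z^e))[u]`,
`D(f) = e·c·z^(e-1)·∂f/∂u`, so `D(z^l u^n) = e·c·n·z^(l+e-1)·u^(n-1)`. -/
noncomputable def Dmap (k : Type*) [Field k] (e : ℕ) (c : k) :
    Polynomial (TruncRing k e) →ₗ[k] Polynomial (TruncRing k e) :=
  (LinearMap.mulLeft k (Polynomial.C ((e : TruncRing k e) *
      algebraMap k (TruncRing k e) c * (truncZ k e) ^ (e - 1)))).comp
    (Polynomial.derivative.restrictScalars k)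

section Concrete

variable (k : Type*) [Field k] (e : ℕ)

/-- The power basis of `k[z]/(z^e)` over `k`. -/
noncomputable def truncBasis : Module.Basis (Fin e) k (TruncRing k e) :=
  ((AdjoinRoot.powerBasis' (monic_X_pow (R := k) e)).basis).reindex
    (finCongr (by simp))

lemma truncBasis_apply (i : Fin e) : truncBasis k e i = truncZ k e ^ (i : ℕ) := by
  have h : ((AdjoinRoot.powerBasis' (monic_X_pow (R := k) e)).basis).reindex
      (finCongr (by simp)) i
      = AdjoinRoot.root (X ^ e : Polynomial k) ^ (i : ℕ) := by
    rw [Module.Basis.reindex_apply]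
    rw [(AdjoinRoot.powerBasis' (monic_X_pow (R := k) e)).basis_eq_pow]
    simp [AdjoinRoot.powerBasis']
    rfl
  exact h

lemma truncZ_pow_eq_zero {m : ℕ} (hm : e ≤ m) : truncZ k e ^ m = 0 := by
  rw [truncZ, ← map_pow, Ideal.Quotient.eq_zero_iff_mem, Ideal.mem_span_singleton]
  exact pow_dvd_pow _ hm

/-- The monomial basis `z^l u^n` of `(k[z]/(z^e))[u]` over `k`. -/
noncomputable def bigBasis : Module.Basis (Fin e × ℕ) k (Polynomial (TruncRing k e)) :=
  (truncBasis k e).smulTower (Polynomial.basisMonomials (TruncRing k e))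

lemma bigBasis_apply (i : Fin e × ℕ) :
    bigBasis k e i = C (truncZ k e ^ (i.1 : ℕ)) * X ^ i.2 := by
  rw [bigBasis, Module.Basis.smulTower_apply, truncBasis_apply, coe_basisMonomials]
  simp only [← X_pow_eq_monomial]
  rw [smul_eq_C_mul]

variable (c : k)

/-- The scalar by which `D` multiplies each monomial basis vector. -/
noncomputable def aFun : Fin e × ℕ → k :=
  fun i => if (i.1 : ℕ) = 0 then (e : k) * c * (i.2 : k) else 0

/-- The index shift of `D` on monomial basis vectors. -/
def sigmaFun (he : 1 ≤ e) : Fin e × ℕ → Fin e × ℕ :=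
  fun i => (⟨e - 1, by omega⟩, i.2 - 1)

lemma Dmap_bigBasis (he : 1 ≤ e) (i : Fin e × ℕ) :
    Dmap k e c (bigBasis k e i) = aFun k e c i • bigBasis k e (sigmaFun e he i) := by
  obtain ⟨⟨l, hl⟩, n⟩ := i
  rw [bigBasis_apply, bigBasis_apply]
  simp only [Dmap, aFun, sigmaFun, LinearMap.coe_comp, Function.comp_apply,
    LinearMap.coe_restrictScalars, LinearMap.mulLeft_apply]
  rw [derivative_C_mul, derivative_X_pow]
  rcases Nat.eq_zero_or_pos n with rfl | hn
  · simp
  by_cases hl0 : l = 0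
  · subst hl0
    rw [if_pos rfl]
    rw [Algebra.smul_def, Polynomial.algebraMap_apply]
    simp only [pow_zero, map_one, one_mul, map_mul, map_natCast]
    ring
  · rw [if_neg hl0, zero_smul]
    have hz : truncZ k e ^ (e - 1) * truncZ k e ^ l = 0 := by
      rw [← pow_add]
      exact truncZ_pow_eq_zero k e (by omega)
    calc C ((e : TruncRing k e) * algebraMap k (TruncRing k e) c * truncZ k e ^ (e - 1)) *
          (C (truncZ k e ^ l) * (C (n : TruncRing k e) * X ^ (n - 1)))
        = C ((e : TruncRing k e) * algebraMap k (TruncRing k e) c * (n : TruncRing k e)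
            * (truncZ k e ^ (e - 1) * truncZ k e ^ l)) * X ^ (n - 1) := by
          simp only [map_mul]; ring
      _ = 0 := by rw [hz, mul_zero, map_zero, zero_mul]

variable (p : ℕ) [CharP k p]

lemma aFun_eq_zero_iff (hc : c ≠ 0) (i : Fin e × ℕ) :
    aFun k e c i = 0 ↔ (1 ≤ (i.1 : ℕ) ∨ p ∣ e * i.2) := by
  unfold aFun
  by_cases h : (i.1 : ℕ) = 0
  · rw [if_pos h]
    have hcast : (e : k) * c * (i.2 : k) = c * ((e * i.2 : ℕ) : k) := by push_cast; ring
    rw [hcast, mul_eq_zero]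
    constructor
    · rintro (h0 | h0)
      · exact absurd h0 hc
      · exact Or.inr ((CharP.cast_eq_zero_iff k p _).1 h0)
    · rintro (h0 | h0)
      · omega
      · exact Or.inr ((CharP.cast_eq_zero_iff k p _).2 h0)
  · rw [if_neg h]
    simp only [eq_self_iff_true, true_iff]
    exact Or.inl (by omega)

lemma aFun_ne_zero_iff (hc : c ≠ 0) (i : Fin e × ℕ) :
    aFun k e c i ≠ 0 ↔ ((i.1 : ℕ) = 0 ∧ ¬ p ∣ e * i.2) := by
  rw [Ne, aFun_eq_zero_iff k e c p hc i]
  constructor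
  · intro h
    push_neg at h
    exact ⟨by omega, h.2⟩
  · rintro ⟨h1, h2⟩
    push_neg
    exact ⟨by omega, h2⟩

lemma sigma_injOn (hc : c ≠ 0) (he : 1 ≤ e) :
    Set.InjOn (sigmaFun e he) {i | aFun k e c i ≠ 0} := by
  rintro ⟨l1, n1⟩ h1 ⟨l2, n2⟩ h2 heq
  simp only [Set.mem_setOf_eq, aFun] at h1 h2
  have hl1 : (l1 : ℕ) = 0 := by by_contra hx; rw [if_neg hx] at h1; exact h1 rfl
  have hl2 : (l2 : ℕ) = 0 := by by_contra hx; rw [if_neg hx] at h2; exact h2 rfl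
  rw [if_pos hl1] at h1
  rw [if_pos hl2] at h2
  have hn1 : n1 ≠ 0 := by rintro rfl; simp at h1
  have hn2 : n2 ≠ 0 := by rintro rfl; simp at h2
  simp only [sigmaFun, Prod.mk.injEq] at heq
  refine Prod.ext (Fin.ext ?_) ?_
  · rw [hl1, hl2]
  · have := heq.2; simp only; omega

lemma mem_image_sigma (hc : c ≠ 0) (he : 1 ≤ e) (i : Fin e × ℕ) :
    i ∈ sigmaFun e he '' {i | aFun k e c i ≠ 0} ↔
      ((i.1 : ℕ) = e - 1 ∧ ¬ p ∣ e * (i.2 + 1)) := by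
  constructor
  · rintro ⟨⟨l, n⟩, hj, rfl⟩
    simp only [Set.mem_setOf_eq, aFun_ne_zero_iff k e c p hc] at hj
    have hn : n ≠ 0 := by rintro rfl; exact hj.2 ⟨0, by ring⟩
    refine ⟨rfl, ?_⟩
    simp only [sigmaFun]
    have : n - 1 + 1 = n := by omega
    rw [this]
    exact hj.2
  · rintro ⟨h1, h2⟩
    refine ⟨(⟨0, by omega⟩, i.2 + 1), ?_, ?_⟩
    · rw [Set.mem_setOf_eq, aFun_ne_zero_iff k e c p hc]
      exact ⟨rfl, h2⟩
    · simp only [sigmaFun]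
      exact Prod.ext (Fin.ext (by simp [h1])) rfl

/-- The reindexing equivalence between the subtype of `ℕ × ℕ` given in the statement and
the subtype of `Fin e × ℕ` used internally. -/
def myEquiv (he : 1 ≤ e) (P : ℕ × ℕ → Prop) (S : Set (Fin e × ℕ))
    (hS : ∀ i : Fin e × ℕ, i ∈ S ↔ P ((i.1 : ℕ), i.2)) :
    {q : ℕ × ℕ // q.1 ≤ e - 1 ∧ P q} ≃ ↥S where
  toFun q := ⟨(⟨q.1.1, by have := q.2.1; omega⟩, q.1.2), (hS _).2 q.2.2⟩
  invFun i := ⟨((i.1.1 : ℕ), i.1.2), ⟨by have := i.1.1.isLt; omega, (hS _).1 i.2⟩⟩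
  left_inv q := Subtype.ext rfl
  right_inv i := Subtype.ext (Prod.ext (Fin.ext rfl) rfl)

end Concrete

/-- Proposition 6.9: the kernel of `D` has `k`-basis
`{z^l u^n : 0 ≤ l ≤ e-1, (l ≥ 1 ∨ p ∣ e·n)}` and the cokernel of `D` has `k`-basis the images
of `{z^l u^n : 0 ≤ l ≤ e-1, (l ≤ e-2 ∨ p ∣ e·(n+1))}`. -/
theorem statement3 (p : ℕ) (hp : p.Prime) (k : Type*) [Field k] [CharP k p]
    (e : ℕ) (he : 1 ≤ e) (c : k) (hc : c ≠ 0) :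
    (∃ bker : Module.Basis {q : ℕ × ℕ // q.1 ≤ e - 1 ∧ (1 ≤ q.1 ∨ p ∣ e * q.2)} k
        (LinearMap.ker (Dmap k e c)),
      ∀ q, (bker q : Polynomial (TruncRing k e))
          = Polynomial.C ((truncZ k e) ^ q.1.1) * Polynomial.X ^ q.1.2) ∧
    (∃ bcoker : Module.Basis {q : ℕ × ℕ // q.1 ≤ e - 1 ∧ (q.1 + 1 ≤ e - 1 ∨ p ∣ e * (q.2 + 1))} k
        (Polynomial (TruncRing k e) ⧸ LinearMap.range (Dmap k e c)),
      ∀ q, bcoker q = Submodule.Quotient.mk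
          (Polynomial.C ((truncZ k e) ^ q.1.1) * Polynomial.X ^ q.1.2)) := by
  classical
  set b := bigBasis k e with hb
  have hf : ∀ i, Dmap k e c (b i) = aFun k e c i • b (sigmaFun e he i) :=
    Dmap_bigBasis k e c he
  have hσ : Set.InjOn (sigmaFun e he) {i | aFun k e c i ≠ 0} :=
    sigma_injOn k e c hc he
  constructor
  · -- kernel
    have hker : LinearMap.ker (Dmap k e c)
        = Submodule.span k (b '' {i | aFun k e c i = 0}) :=
      diag_ker b (Dmap k e c) _ _ hf hσ
    have hS : ∀ i : Fin e × ℕ, i ∈ {i : Fin e × ℕ | aFun k e c i = 0} ↔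
        (1 ≤ ((i.1 : ℕ), i.2).1 ∨ p ∣ e * ((i.1 : ℕ), i.2).2) := by
      intro i
      exact aFun_eq_zero_iff k e c p hc i
    let eqv := myEquiv e he (fun q => 1 ≤ q.1 ∨ p ∣ e * q.2) _ hS
    refine ⟨((spanBasis b {i | aFun k e c i = 0}).map
      (LinearEquiv.ofEq _ _ hker.symm)).reindex eqv.symm, fun q => ?_⟩
    rw [Module.Basis.reindex_apply, Equiv.symm_symm, Module.Basis.map_apply, LinearEquiv.coe_ofEq_apply,
      spanBasis_apply, hb, bigBasis_apply]
    rfl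
  · -- cokernel
    have hrange : LinearMap.range (Dmap k e c)
        = Submodule.span k (b '' (sigmaFun e he '' {i | aFun k e c i ≠ 0})) :=
      diag_range b (Dmap k e c) _ _ hf
    have hS : ∀ i : Fin e × ℕ, i ∈ (sigmaFun e he '' {i | aFun k e c i ≠ 0})ᶜ ↔
        (((i.1 : ℕ), i.2).1 + 1 ≤ e - 1 ∨ p ∣ e * (((i.1 : ℕ), i.2).2 + 1)) := by
      intro i
      rw [Set.mem_compl_iff, mem_image_sigma k e c p hc he i]
      have := i.1.isLt
      constructor
      · intro h
        by_cases h1 : (i.1 : ℕ) = e - 1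
        · right
          by_contra h2
          exact h ⟨h1, h2⟩
        · left; omega
      · rintro (h1 | h1) ⟨h2, h3⟩
        · omega
        · exact h3 h1
    let eqv := myEquiv e he (fun q => q.1 + 1 ≤ e - 1 ∨ p ∣ e * (q.2 + 1)) _ hS
    refine ⟨((quotBasis b (sigmaFun e he '' {i | aFun k e c i ≠ 0})).map
      (Submodule.quotEquivOfEq _ _ hrange.symm)).reindex eqv.symm, fun q => ?_⟩
    rw [Module.Basis.reindex_apply, Equiv.symm_symm, Module.Basis.map_apply, quotBasis_apply,
      Submodule.quotEquivOfEq_mk, hb, bigBasis_apply]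
    rfl
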